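/- Let u, v be two vertices of a simple connected graph G of order n, and let v₁, v₂, …, v_s (1 ≤ s ≤ d(v)) be vertices in N_G(v) \ N_G(u), each different from u. Let G′ = G − vv₁ − vv₂ − ⋯ − vv_s + uv₁ + uv₂ + ⋯ + uv_s, and let f be a harmonic eigenfunction associated with λ₂(G). If f(u) = f(v), then λ₂(G) ≥ λ₂(G′). -/

import Mathlib

open Matrix Finset BigOperators

namespace NLap

variable {V : Type} [Fintype V] [DecidableEq V]

/-- The normalized Laplacian matrix `𝓛(G) = D^{-1/2} (D - A) D^{-1/2}` of a simple graph. -/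
noncomputable def normLap (G : SimpleGraph V) [DecidableRel G.Adj] : Matrix V V ℝ :=
  Matrix.diagonal (fun v => (Real.sqrt (G.degree v : ℝ))⁻¹) * G.lapMatrix ℝ *
    Matrix.diagonal (fun v => (Real.sqrt (G.degree v : ℝ))⁻¹)

/-- The `k`-th smallest eigenvalue (1-indexed, counted with multiplicity) of a real matrix:
the `k`-th element of the sorted multiset of roots of its characteristic polynomial. -/
noncomputable def nthEig (M : Matrix V V ℝ) (k : ℕ) : ℝ :=
  (M.charpoly.roots.sort (· ≤ ·)).getD (k - 1) 0

/-- `λ₂(G)`, the second smallest normalized Laplacian eigenvalue. -/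
noncomputable def lambda2 (G : SimpleGraph V) [DecidableRel G.Adj] : ℝ :=
  nthEig (normLap G) 2

/-- `ρ(𝓛(G)) = λ_n(G)`, the normalized Laplacian spectral radius. -/
noncomputable def rhoL (G : SimpleGraph V) [DecidableRel G.Adj] : ℝ :=
  nthEig (normLap G) (Fintype.card V)

/-- `f` is a harmonic eigenfunction associated with the eigenvalue `lam` of `𝓛(G)`:
`f ≠ 0` and `L f = lam • D f`. -/
def IsHarmonic (G : SimpleGraph V) [DecidableRel G.Adj] (lam : ℝ) (f : V → ℝ) : Prop :=
  f ≠ 0 ∧ G.lapMatrix ℝ *ᵥ f = fun v => lam * ((G.degree v : ℝ) * f v)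

/-- `∑_{uv ∈ E(G)} (f(u) - f(v))²`. -/
noncomputable def edgeSum (G : SimpleGraph V) [DecidableRel G.Adj] (f : V → ℝ) : ℝ :=
  ∑ e ∈ G.edgeFinset, Sym2.lift ⟨fun u v => (f u - f v) ^ 2, fun u v => by ring⟩ e


/-- The graph obtained from `G` by subdividing the edge `uv`:
delete `uv`, add a new vertex `w = Sum.inr ()` and the edges `uw`, `wv`. -/
def subdivide {V : Type} (G : SimpleGraph V) (u v : V) : SimpleGraph (V ⊕ Unit) where
  Adj x y :=
    match x, y with
    | Sum.inl a, Sum.inl b => G.Adj a b ∧ ¬(a = u ∧ b = v) ∧ ¬(a = v ∧ b = u)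
    | Sum.inl a, Sum.inr _ => a = u ∨ a = v
    | Sum.inr _, Sum.inl b => b = u ∨ b = v
    | Sum.inr _, Sum.inr _ => False
  symm := by
    refine ⟨?_⟩
    rintro (a | a) (b | b) h
    · exact ⟨h.1.symm, fun hc => h.2.2 ⟨hc.2, hc.1⟩, fun hc => h.2.1 ⟨hc.2, hc.1⟩⟩
    · exact h
    · exact h
    · exact h
  loopless := by
    refine ⟨?_⟩
    rintro (a | a) h
    · exact G.loopless.irrefl a h.1
    · exact h

instance {V : Type} [DecidableEq V] (G : SimpleGraph V) [DecidableRel G.Adj] (u v : V) :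
    DecidableRel (subdivide G u v).Adj := fun x y => by
  rcases x with a | a <;> rcases y with b | b
  · exact inferInstanceAs (Decidable (G.Adj a b ∧ ¬(a = u ∧ b = v) ∧ ¬(a = v ∧ b = u)))
  · exact inferInstanceAs (Decidable (a = u ∨ a = v))
  · exact inferInstanceAs (Decidable (b = u ∨ b = v))
  · exact inferInstanceAs (Decidable False)

/-- `IsSubdivisionOf H G` : `H` is obtained from `G` (up to isomorphism) by repeatedly
subdividing edges. -/
inductive IsSubdivisionOf : {V W : Type} → SimpleGraph W → SimpleGraph V → Prop
  | iso {V W : Type} {G : SimpleGraph V} {H : SimpleGraph W} :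
      Nonempty (G ≃g H) → IsSubdivisionOf H G
  | step {V W : Type} {G : SimpleGraph V} {H : SimpleGraph W} (u v : V) :
      G.Adj u v → IsSubdivisionOf H (subdivide G u v) → IsSubdivisionOf H G

/-- The graph obtained from `G₁` and `G₂` by identifying `u ∈ V(G₁)` with `v ∈ V(G₂)`;
the merged vertex is `Sum.inl u`. -/
def glue {V₁ V₂ : Type} (G₁ : SimpleGraph V₁) (G₂ : SimpleGraph V₂) (u : V₁) (v : V₂) :
    SimpleGraph (V₁ ⊕ {y : V₂ // y ≠ v}) where
  Adj x y :=
    match x, y with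
    | Sum.inl a, Sum.inl b => G₁.Adj a b
    | Sum.inl a, Sum.inr b => a = u ∧ G₂.Adj v b.1
    | Sum.inr a, Sum.inl b => b = u ∧ G₂.Adj v a.1
    | Sum.inr a, Sum.inr b => G₂.Adj a.1 b.1
  symm := by
    refine ⟨?_⟩
    rintro (a | a) (b | b) h
    · exact h.symm
    · exact h
    · exact h
    · exact h.symm
  loopless := by
    refine ⟨?_⟩
    rintro (a | a) h
    · exact G₁.loopless.irrefl a h
    · exact G₂.loopless.irrefl a.1 h

instance {V₁ V₂ : Type} [DecidableEq V₁] (G₁ : SimpleGraph V₁) (G₂ : SimpleGraph V₂)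
    [DecidableRel G₁.Adj] [DecidableRel G₂.Adj] (u : V₁) (v : V₂) :
    DecidableRel (glue G₁ G₂ u v).Adj := fun x y => by
  rcases x with a | a <;> rcases y with b | b
  · exact inferInstanceAs (Decidable (G₁.Adj a b))
  · exact inferInstanceAs (Decidable (a = u ∧ G₂.Adj v b.1))
  · exact inferInstanceAs (Decidable (b = u ∧ G₂.Adj v a.1))
  · exact inferInstanceAs (Decidable (G₂.Adj a.1 b.1))

/-- The graph `G - vv₁ - ⋯ - vvₛ + uv₁ + ⋯ + uvₛ`, where `S = {v₁, …, vₛ}`. -/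
def shiftEdges {V : Type} [DecidableEq V] (G : SimpleGraph V) (u v : V) (S : Finset V) :
    SimpleGraph V where
  Adj x y := x ≠ y ∧
    ((G.Adj x y ∧ ¬(x = v ∧ y ∈ S) ∧ ¬(y = v ∧ x ∈ S)) ∨ (x = u ∧ y ∈ S) ∨ (y = u ∧ x ∈ S))
  symm := by
    refine ⟨?_⟩
    rintro x y ⟨hxy, h⟩
    refine ⟨hxy.symm, ?_⟩
    rcases h with h | h | h
    · exact Or.inl ⟨h.1.symm, h.2.2, h.2.1⟩
    · exact Or.inr (Or.inr h)
    · exact Or.inr (Or.inl h)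
  loopless := ⟨fun x h => h.1 rfl⟩

instance {V : Type} [DecidableEq V] (G : SimpleGraph V) [DecidableRel G.Adj] (u v : V)
    (S : Finset V) : DecidableRel (shiftEdges G u v S).Adj := fun x y =>
  inferInstanceAs (Decidable (_ ∧ _))

/-- The star on `n + 1` vertices, with center `none`. -/
def starGraph (n : ℕ) : SimpleGraph (Option (Fin n)) where
  Adj i j := (i = none ∧ j ≠ none) ∨ (j = none ∧ i ≠ none)
  symm := by
    refine ⟨?_⟩
    rintro i j (h | h)
    · exact Or.inr h
    · exact Or.inl h
  loopless := by
    refine ⟨?_⟩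
    rintro i (h | h) <;> exact h.2 h.1

instance (n : ℕ) : DecidableRel (starGraph n).Adj := fun i j =>
  inferInstanceAs (Decidable (_ ∨ _))



section Aux

open Polynomial

lemma charpoly_conj (U W B : Matrix V V ℝ) (h1 : U * W = 1) (_h2 : W * U = 1) :
    (U * B * W).charpoly = B.charpoly := by
  have hcm : charmatrix (U * B * W) = U.map C * charmatrix B * W.map C := by
    have hUc : Commute (Matrix.scalar V (X : ℝ[X])) (U.map C) :=
      scalar_commute _ (fun r' => Commute.all _ _) _
    unfold charmatrix
    have hmul : (U.map (C : ℝ → ℝ[X])) * (W.map C) = 1 := by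
      rw [← Matrix.map_mul, h1, Matrix.map_one _ (map_zero C) (map_one C)]
    simp only [RingHom.mapMatrix_apply]
    rw [mul_sub, sub_mul, ← hUc.eq, mul_assoc ((Matrix.scalar V) X), hmul, mul_one,
      Matrix.map_mul, Matrix.map_mul]
  rw [Matrix.charpoly, Matrix.charpoly, hcm, det_mul, det_mul]
  have hdet : (U.map (C : ℝ → ℝ[X])).det * (W.map C).det = 1 := by
    rw [← det_mul, ← Matrix.map_mul, h1, Matrix.map_one _ (map_zero C) (map_one C), det_one]
  calc (U.map (C : ℝ → ℝ[X])).det * (charmatrix B).det * (W.map C).det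
      = (charmatrix B).det * ((U.map C).det * (W.map C).det) := by ring
    _ = (charmatrix B).det := by rw [hdet, mul_one]

lemma charpoly_diagonal (d : V → ℝ) :
    (Matrix.diagonal d).charpoly = ∏ i : V, (X - C (d i)) := by
  have hcm : charmatrix (Matrix.diagonal d) = Matrix.diagonal (fun i => X - C (d i)) := by
    ext i j
    by_cases h : i = j
    · subst h; simp [charmatrix_apply_eq]
    · simp [charmatrix_apply_ne _ _ _ h, Matrix.diagonal_apply_ne _ h]
  rw [Matrix.charpoly, hcm, det_diagonal]

lemma roots_charpoly_herm {M : Matrix V V ℝ} (hM : M.IsHermitian) :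
    M.charpoly.roots = Finset.univ.val.map hM.eigenvalues := by
  have hU := hM.eigenvectorUnitary.2
  have h1 : (hM.eigenvectorUnitary : Matrix V V ℝ) * star (hM.eigenvectorUnitary : Matrix V V ℝ) = 1 :=
    (Matrix.mem_unitaryGroup_iff).mp hU
  have h2 : star (hM.eigenvectorUnitary : Matrix V V ℝ) * (hM.eigenvectorUnitary : Matrix V V ℝ) = 1 :=
    (Matrix.mem_unitaryGroup_iff').mp hU
  have hspec := hM.spectral_theorem
  rw [RCLike.ofReal_real_eq_id] at hspec
  simp only [Function.id_comp, Unitary.conjStarAlgAut_apply] at hspec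
  have hcp : M.charpoly = ∏ i : V, (X - C (hM.eigenvalues i)) := by
    conv_lhs => rw [hspec]
    rw [charpoly_conj _ _ _ h1 h2, charpoly_diagonal]
  conv_lhs => rw [hcp]
  have hprod : ∏ i : V, (X - C (hM.eigenvalues i)) =
      ((Finset.univ.val.map hM.eigenvalues).map fun a => X - C a).prod := by
    rw [Multiset.map_map, Finset.prod_eq_multiset_prod]
    rfl
  rw [hprod, Polynomial.roots_multiset_prod_X_sub_C]

lemma countP_sort_eq {M : Matrix V V ℝ} (hM : M.IsHermitian) (R : ℝ) :
    (M.charpoly.roots.sort (· ≤ ·)).countP (fun x => decide (x ≤ R)) =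
      (Finset.univ.filter (fun i => hM.eigenvalues i ≤ R)).card := by
  have h1 : ((M.charpoly.roots.sort (· ≤ ·) : List ℝ) : Multiset ℝ) = M.charpoly.roots :=
    Multiset.sort_eq _ _
  have h2 := Multiset.coe_countP (p := fun x => x ≤ R) (M.charpoly.roots.sort (· ≤ ·))
  rw [h1] at h2
  rw [← h2, roots_charpoly_herm hM, Multiset.countP_map]
  rw [Finset.card_filter]
  simp [Multiset.countP_eq_card_filter, Finset.filter_val]
  congr 1

lemma sort_spec {M : Matrix V V ℝ} (hM : M.IsHermitian) (h2 : 2 ≤ Fintype.card V) :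
    ∃ a b t, M.charpoly.roots.sort (· ≤ ·) = a :: b :: t ∧ nthEig M 2 = b ∧ a ≤ b ∧
      (∀ x ∈ t, b ≤ x) ∧ (∃ k, hM.eigenvalues k = a) := by
  have hlen : (M.charpoly.roots.sort (· ≤ ·)).length = Fintype.card V := by
    rw [Multiset.length_sort, roots_charpoly_herm hM, Multiset.card_map]
    simp
  have hsorted : (M.charpoly.roots.sort (· ≤ ·)).Pairwise (· ≤ ·) := Multiset.pairwise_sort _ _
  have hmem : ∀ x ∈ M.charpoly.roots.sort (· ≤ ·), ∃ k, hM.eigenvalues k = x := by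
    intro x hx
    have hx' : x ∈ M.charpoly.roots := (Multiset.mem_sort _).mp hx
    rw [roots_charpoly_herm hM, Multiset.mem_map] at hx'
    obtain ⟨k, _, hk⟩ := hx'
    exact ⟨k, hk⟩
  rcases hml : M.charpoly.roots.sort (· ≤ ·) with _ | ⟨a, _ | ⟨b, t⟩⟩
  · rw [hml] at hlen; simp at hlen; omega
  · rw [hml] at hlen; simp at hlen; omega
  · rw [hml] at hsorted hmem
    rw [List.pairwise_cons] at hsorted
    have hs2 := hsorted.2
    rw [List.pairwise_cons] at hs2
    refine ⟨a, b, t, rfl, ?_, ?_, hs2.1, hmem a (by simp)⟩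
    · rw [nthEig, hml]; rfl
    · exact hsorted.1 b (by simp)

lemma eig_unique_of_lt {M : Matrix V V ℝ} (hM : M.IsHermitian) (h2 : 2 ≤ Fintype.card V)
    {R : ℝ} (hlt : R < nthEig M 2) :
    ∀ i j, hM.eigenvalues i ≤ R → hM.eigenvalues j ≤ R → i = j := by
  intro i j hi hj
  by_contra hij
  have hcard : 2 ≤ (Finset.univ.filter (fun i => hM.eigenvalues i ≤ R)).card := by
    apply Finset.one_lt_card.mpr
    exact ⟨i, by simp [hi], j, by simp [hj], hij⟩
  rw [← countP_sort_eq hM R] at hcard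
  obtain ⟨a, b, t, hml, hb, hab, hbt, -⟩ := sort_spec hM h2
  rw [hml] at hcard
  rw [hb] at hlt
  have htz : t.countP (fun x => decide (x ≤ R)) = 0 := by
    rw [List.countP_eq_zero]
    intro x hx
    simpa using not_le.mpr (lt_of_lt_of_le hlt (hbt x hx))
  rw [List.countP_cons, List.countP_cons, htz] at hcard
  have hnb : ¬ (b ≤ R) := not_le.mpr hlt
  simp [hnb] at hcard
  split at hcard <;> omega

lemma mulVec_dot_mulVec (U : Matrix V V ℝ) (hU : star U * U = 1) (a b : V → ℝ) :
    (U *ᵥ a) ⬝ᵥ (U *ᵥ b) = a ⬝ᵥ b := by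
  rw [Matrix.dotProduct_mulVec, ← Matrix.mulVec_transpose, mulVec_mulVec]
  have h : Uᵀ * U = 1 := by
    simpa [Matrix.star_eq_conjTranspose, Matrix.conjTranspose_eq_transpose_of_trivial] using hU
  rw [h, one_mulVec]

lemma exists_kernel_pair {M : Matrix V V ℝ} (hM : M.IsHermitian) (h2 : 2 ≤ Fintype.card V)
    (hnn : ∀ k, 0 ≤ hM.eigenvalues k) (hle : nthEig M 2 ≤ 0) :
    ∃ y z : V → ℝ, M *ᵥ y = 0 ∧ M *ᵥ z = 0 ∧ y ⬝ᵥ z = 0 ∧ y ⬝ᵥ y = 1 ∧ z ⬝ᵥ z = 1 := by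
  obtain ⟨a, b, t, hml, hb, hab, hbt, k, hk⟩ := sort_spec hM h2
  have hcard : 2 ≤ (Finset.univ.filter (fun i => hM.eigenvalues i ≤ 0)).card := by
    rw [← countP_sort_eq hM 0, hml, List.countP_cons, List.countP_cons]
    have hb0 : b ≤ 0 := hb ▸ hle
    have ha0 : a ≤ 0 := le_trans hab hb0
    simp [hb0, ha0]
  obtain ⟨i, hi, j, hj, hij⟩ := Finset.one_lt_card.mp hcard
  simp only [Finset.mem_filter] at hi hj
  have hmui : hM.eigenvalues i = 0 := le_antisymm hi.2 (hnn i)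
  have hmuj : hM.eigenvalues j = 0 := le_antisymm hj.2 (hnn j)
  have hU := hM.eigenvectorUnitary.2
  have h2' : star (hM.eigenvectorUnitary : Matrix V V ℝ) * (hM.eigenvectorUnitary : Matrix V V ℝ) = 1 :=
    (Matrix.mem_unitaryGroup_iff').mp hU
  have hspec := hM.spectral_theorem
  rw [RCLike.ofReal_real_eq_id] at hspec
  simp only [Function.id_comp, Unitary.conjStarAlgAut_apply] at hspec
  have hcol : ∀ p : V, M *ᵥ ((hM.eigenvectorUnitary : Matrix V V ℝ) *ᵥ Pi.single p 1) =
      hM.eigenvalues p • ((hM.eigenvectorUnitary : Matrix V V ℝ) *ᵥ Pi.single p 1) := by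
    intro p
    have hMv := congrArg
      (fun A : Matrix V V ℝ => A *ᵥ ((hM.eigenvectorUnitary : Matrix V V ℝ) *ᵥ Pi.single p 1)) hspec
    rw [hMv]
    simp only [← mulVec_mulVec]
    rw [mulVec_mulVec _ (star (hM.eigenvectorUnitary : Matrix V V ℝ)), h2', one_mulVec,
      diagonal_mulVec_single]
    have hsingle : (Pi.single p (hM.eigenvalues p * 1) : V → ℝ)
        = hM.eigenvalues p • (Pi.single p 1 : V → ℝ) := by
      ext q
      by_cases hq : q = p <;> simp [hq, Pi.single_apply]
    rw [hsingle, mulVec_smul]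
  refine ⟨(hM.eigenvectorUnitary : Matrix V V ℝ) *ᵥ Pi.single i 1,
    (hM.eigenvectorUnitary : Matrix V V ℝ) *ᵥ Pi.single j 1, ?_, ?_, ?_, ?_, ?_⟩
  · rw [hcol i, hmui, zero_smul]
  · rw [hcol j, hmuj, zero_smul]
  · rw [mulVec_dot_mulVec _ h2']
    simp [dotProduct, Pi.single_apply, hij, hij.symm]
  · rw [mulVec_dot_mulVec _ h2']
    simp [dotProduct, Pi.single_apply]
  · rw [mulVec_dot_mulVec _ h2']
    simp [dotProduct, Pi.single_apply]

lemma dot_mulVec_left (U : Matrix V V ℝ) (y a : V → ℝ) :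
    y ⬝ᵥ (U *ᵥ a) = (star U *ᵥ y) ⬝ᵥ a := by
  rw [Matrix.dotProduct_mulVec]
  congr 1
  rw [Matrix.star_eq_conjTranspose, Matrix.conjTranspose_eq_transpose_of_trivial,
    Matrix.mulVec_transpose]

lemma second_eig_le {M : Matrix V V ℝ} (hM : M.IsHermitian) (h2 : 2 ≤ Fintype.card V)
    {φ x : V → ℝ} (hφ0 : φ ≠ 0) (hx0 : x ≠ 0) (hMφ : M *ᵥ φ = 0) (horth : x ⬝ᵥ φ = 0)
    {R : ℝ} (hR0 : 0 ≤ R) (hR : x ⬝ᵥ (M *ᵥ x) ≤ R * (x ⬝ᵥ x)) : nthEig M 2 ≤ R := by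
  by_contra hlt
  push_neg at hlt
  have hone := eig_unique_of_lt hM h2 hlt
  have hU := hM.eigenvectorUnitary.2
  have h1 : (hM.eigenvectorUnitary : Matrix V V ℝ) * star (hM.eigenvectorUnitary : Matrix V V ℝ) = 1 :=
    (Matrix.mem_unitaryGroup_iff).mp hU
  have h2' : star (hM.eigenvectorUnitary : Matrix V V ℝ) * (hM.eigenvectorUnitary : Matrix V V ℝ) = 1 :=
    (Matrix.mem_unitaryGroup_iff').mp hU
  have hspec := hM.spectral_theorem
  rw [RCLike.ofReal_real_eq_id] at hspec
  simp only [Function.id_comp, Unitary.conjStarAlgAut_apply] at hspec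
  set U : Matrix V V ℝ := (hM.eigenvectorUnitary : Matrix V V ℝ) with hUdef
  set μ : V → ℝ := hM.eigenvalues with hμdef
  set cx : V → ℝ := star U *ᵥ x with hcxdef
  set cφ : V → ℝ := star U *ᵥ φ with hcφdef
  have hrec : ∀ y : V → ℝ, U *ᵥ (star U *ᵥ y) = y := by
    intro y; rw [mulVec_mulVec, h1, one_mulVec]
  have hWdot : ∀ y z : V → ℝ, (star U *ᵥ y) ⬝ᵥ (star U *ᵥ z) = y ⬝ᵥ z := by
    intro y z
    apply mulVec_dot_mulVec
    rw [star_star, h1]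
  have hQ : ∀ y : V → ℝ, y ⬝ᵥ (M *ᵥ y) = ∑ i, μ i * ((star U *ᵥ y) i)^2 := by
    intro y
    have hMy : M *ᵥ y = U *ᵥ (diagonal μ *ᵥ (star U *ᵥ y)) := by
      have hA := congrArg (fun A : Matrix V V ℝ => A *ᵥ y) hspec
      rw [hA]
      simp only [← mulVec_mulVec]
    rw [hMy, dot_mulVec_left]
    simp only [dotProduct, mulVec_diagonal]
    apply Finset.sum_congr rfl
    intro i _
    ring
  have hDcφ : ∀ i, μ i * cφ i = 0 := by
    intro i
    have hWM : star U * M = diagonal μ * star U := by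
      conv_lhs => rw [hspec]
      rw [← mul_assoc, ← mul_assoc, h2', one_mul]
    have hh : star U *ᵥ (M *ᵥ φ) = diagonal μ *ᵥ cφ := by
      rw [mulVec_mulVec, hWM, ← mulVec_mulVec]
    rw [hMφ, mulVec_zero] at hh
    have hh' := congrFun hh.symm i
    rwa [mulVec_diagonal] at hh'
  have hcφ0 : cφ ≠ 0 := by
    intro h
    apply hφ0
    rw [← hrec φ, ← hcφdef, h, mulVec_zero]
  obtain ⟨i₀, hi₀⟩ := Function.ne_iff.mp hcφ0
  have hμi₀ : μ i₀ = 0 := by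
    rcases mul_eq_zero.mp (hDcφ i₀) with h | h
    · exact h
    · exact absurd h hi₀
  have hgt : ∀ i, i ≠ i₀ → R < μ i := by
    intro i hi
    by_contra hle
    push_neg at hle
    exact hi (hone i i₀ hle (hμi₀ ▸ hR0))
  have hcφsupp : ∀ i, i ≠ i₀ → cφ i = 0 := by
    intro i hi
    have hμ : μ i ≠ 0 := ne_of_gt (lt_of_le_of_lt hR0 (hgt i hi))
    rcases mul_eq_zero.mp (hDcφ i) with h | h
    · exact absurd h hμ
    · exact h
  have hcxi₀ : cx i₀ = 0 := by
    have h0 : cx ⬝ᵥ cφ = 0 := by rw [hcxdef, hcφdef, hWdot, horth]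
    rw [dotProduct] at h0
    rw [Finset.sum_eq_single i₀ (fun i _ hi => by rw [hcφsupp i hi, mul_zero])
      (fun h => absurd (Finset.mem_univ i₀) h)] at h0
    rcases mul_eq_zero.mp h0 with h | h
    · exact h
    · exact absurd h hi₀
  have hcx0 : cx ≠ 0 := by
    intro h
    apply hx0
    rw [← hrec x, ← hcxdef, h, mulVec_zero]
  obtain ⟨k, hk⟩ := Function.ne_iff.mp hcx0
  have hki₀ : k ≠ i₀ := fun h => hk (h ▸ hcxi₀)
  have hxx : x ⬝ᵥ x = ∑ i, (cx i)^2 := by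
    rw [← hWdot x x, ← hcxdef, dotProduct]
    apply Finset.sum_congr rfl
    intro i _
    ring
  have hQx : x ⬝ᵥ (M *ᵥ x) = ∑ i, μ i * (cx i)^2 := hQ x
  have hpos : 0 < ∑ i, (μ i - R) * (cx i)^2 := by
    apply Finset.sum_pos'
    · intro i _
      rcases eq_or_ne (cx i) 0 with h | h
      · simp [h]
      · have hi : i ≠ i₀ := fun he => h (he ▸ hcxi₀)
        have := hgt i hi
        exact mul_nonneg (by linarith) (sq_nonneg _)
    · refine ⟨k, Finset.mem_univ k, ?_⟩
      have := hgt k hki₀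
      have ha : 0 < μ k - R := by linarith
      have hb : 0 < (cx k)^2 := lt_of_le_of_ne (sq_nonneg _) (Ne.symm (pow_ne_zero 2 hk))
      exact mul_pos ha hb
  have hsum : ∑ i, (μ i - R) * (cx i)^2 = (∑ i, μ i * (cx i)^2) - R * ∑ i, (cx i)^2 := by
    rw [Finset.mul_sum, ← Finset.sum_sub_distrib]
    apply Finset.sum_congr rfl
    intro i _
    ring
  rw [hsum] at hpos
  rw [hQx, hxx] at hR
  linarith

end Aux

section GraphAux

lemma exists_adj_of_connected (G : SimpleGraph V) [DecidableRel G.Adj] (hG : G.Connected)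
    (hnt : Nontrivial V) (w : V) : ∃ z, G.Adj w z := by
  obtain ⟨z, hz⟩ := exists_ne w
  obtain ⟨p⟩ := hG.preconnected w z
  cases p with
  | nil => exact absurd rfl hz.symm
  | cons h _ => exact ⟨_, h⟩

lemma degree_pos_of_connected (G : SimpleGraph V) [DecidableRel G.Adj] (hG : G.Connected)
    (hnt : Nontrivial V) (w : V) : 0 < G.degree w := by
  rw [G.degree_pos_iff_exists_adj]
  exact exists_adj_of_connected G hG hnt w

lemma shift_adj_iff (G : SimpleGraph V) [DecidableRel G.Adj] (u v : V) (S : Finset V)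
    (hu : u ∉ S) (x y : V) :
    (shiftEdges G u v S).Adj x y ↔
      (G.Adj x y ∧ ¬((x = v ∧ y ∈ S) ∨ (y = v ∧ x ∈ S))) ∨
        ((x = u ∧ y ∈ S) ∨ (y = u ∧ x ∈ S)) := by
  change (x ≠ y ∧ ((G.Adj x y ∧ ¬(x = v ∧ y ∈ S) ∧ ¬(y = v ∧ x ∈ S)) ∨ (x = u ∧ y ∈ S) ∨
    (y = u ∧ x ∈ S))) ↔ _
  constructor
  · rintro ⟨hxy, h | h | h⟩
    · exact Or.inl ⟨h.1, fun hc => hc.elim h.2.1 h.2.2⟩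
    · exact Or.inr (Or.inl h)
    · exact Or.inr (Or.inr h)
  · rintro (⟨ha, hn⟩ | h)
    · exact ⟨ha.ne, Or.inl ⟨ha, fun hc => hn (Or.inl hc), fun hc => hn (Or.inr hc)⟩⟩
    · have hne : x ≠ y := by
        rcases h with ⟨hxu, hyS⟩ | ⟨hyu, hxS⟩
        · intro he; apply hu; rw [← hxu, he]; exact hyS
        · intro he; apply hu; rw [← hyu, ← he]; exact hxS
      rcases h with h' | h'
      · exact ⟨hne, Or.inr (Or.inl h')⟩
      · exact ⟨hne, Or.inr (Or.inr h')⟩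

lemma pair_sum_eq (S : Finset V) (p : V → V → ℝ) (w : V) (hw : w ∉ S) :
    ∑ x : V, ∑ y : V, (if (x = w ∧ y ∈ S) ∨ (y = w ∧ x ∈ S) then p x y else 0)
      = (∑ z ∈ S, p w z) + ∑ z ∈ S, p z w := by
  have hsplit : ∀ x y : V, (if (x = w ∧ y ∈ S) ∨ (y = w ∧ x ∈ S) then p x y else 0)
      = (if x = w ∧ y ∈ S then p x y else 0) + (if y = w ∧ x ∈ S then p x y else 0) := by
    intro x y
    by_cases h1 : x = w ∧ y ∈ S <;> by_cases h2 : y = w ∧ x ∈ S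
    · exact absurd (h1.1 ▸ h2.2) hw
    · rw [if_pos (Or.inl h1), if_pos h1, if_neg h2, add_zero]
    · rw [if_pos (Or.inr h2), if_neg h1, if_pos h2, zero_add]
    · simp [h1, h2]
  simp_rw [hsplit, Finset.sum_add_distrib]
  congr 1
  · have hinner : ∀ x : V, ∑ y : V, (if x = w ∧ y ∈ S then p x y else 0)
        = if x = w then ∑ z ∈ S, p x z else 0 := by
      intro x
      by_cases hx : x = w
      · simp only [hx, true_and, if_true]
        rw [Finset.sum_ite_mem, Finset.univ_inter]
      · simp [hx]
    simp_rw [hinner]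
    rw [Finset.sum_ite_eq' Finset.univ w (fun x => ∑ z ∈ S, p x z)]
    simp
  · have hinner : ∀ x : V, ∑ y : V, (if y = w ∧ x ∈ S then p x y else 0)
        = if x ∈ S then p x w else 0 := by
      intro x
      by_cases hx : x ∈ S
      · simp only [hx, and_true]
        rw [Finset.sum_ite_eq' Finset.univ w (fun y => p x y)]
        simp
      · simp [hx]
    simp_rw [hinner]
    rw [Finset.sum_ite_mem, Finset.univ_inter]

lemma shift_sum (G : SimpleGraph V) [DecidableRel G.Adj] (u v : V) (S : Finset V)
    (hSv : ∀ x ∈ S, G.Adj v x) (hSu : ∀ x ∈ S, ¬ G.Adj u x) (hu : u ∉ S) (huv : u ≠ v)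
    (p : V → V → ℝ) (hp : ∀ z ∈ S, p u z = p v z) (hp2 : ∀ z ∈ S, p z u = p z v) :
    ∑ x : V, ∑ y : V, (if (shiftEdges G u v S).Adj x y then p x y else 0)
      = ∑ x : V, ∑ y : V, (if G.Adj x y then p x y else 0) := by
  have hvS : v ∉ S := fun h => G.irrefl (hSv v h)
  have key : ∀ x y : V,
      (if (shiftEdges G u v S).Adj x y then p x y else 0)
        + (if (x = v ∧ y ∈ S) ∨ (y = v ∧ x ∈ S) then p x y else 0)
      = (if G.Adj x y then p x y else 0)
        + (if (x = u ∧ y ∈ S) ∨ (y = u ∧ x ∈ S) then p x y else 0) := by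
    intro x y
    by_cases huc : (x = u ∧ y ∈ S) ∨ (y = u ∧ x ∈ S)
    · have hnG : ¬ G.Adj x y := by
        rcases huc with ⟨rfl, hy⟩ | ⟨rfl, hx⟩
        · exact hSu y hy
        · exact fun ha => hSu x hx ha.symm
      have hnv : ¬ ((x = v ∧ y ∈ S) ∨ (y = v ∧ x ∈ S)) := by
        rintro (⟨hv1, hv2⟩ | ⟨hv1, hv2⟩) <;> rcases huc with ⟨h1, h2⟩ | ⟨h1, h2⟩
        · exact huv (h1 ▸ hv1)
        · exact hvS (hv1 ▸ h2)
        · exact hvS (hv1 ▸ h2)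
        · exact huv (h1 ▸ hv1)
      have hG' : (shiftEdges G u v S).Adj x y :=
        (shift_adj_iff G u v S hu x y).mpr (Or.inr huc)
      simp [hG', hnG, hnv, huc]
    · by_cases hvc : (x = v ∧ y ∈ S) ∨ (y = v ∧ x ∈ S)
      · have hG : G.Adj x y := by
          rcases hvc with ⟨rfl, hy⟩ | ⟨rfl, hx⟩
          · exact hSv y hy
          · exact (hSv x hx).symm
        have hnG' : ¬ (shiftEdges G u v S).Adj x y := by
          rw [shift_adj_iff G u v S hu x y]
          rintro (⟨-, hn⟩ | hc)
          · exact hn hvc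
          · exact huc hc
        simp [hG, hnG', hvc, huc]
      · have hiff : (shiftEdges G u v S).Adj x y ↔ G.Adj x y := by
          rw [shift_adj_iff G u v S hu x y]
          constructor
          · rintro (⟨h, -⟩ | hc)
            · exact h
            · exact absurd hc huc
          · intro h; exact Or.inl ⟨h, hvc⟩
        simp only [hvc, huc, if_neg, if_congr hiff rfl rfl]
  have H : (∑ x : V, ∑ y : V, (if (shiftEdges G u v S).Adj x y then p x y else 0))
        + (∑ x : V, ∑ y : V, (if (x = v ∧ y ∈ S) ∨ (y = v ∧ x ∈ S) then p x y else 0))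
      = (∑ x : V, ∑ y : V, (if G.Adj x y then p x y else 0))
        + (∑ x : V, ∑ y : V, (if (x = u ∧ y ∈ S) ∨ (y = u ∧ x ∈ S) then p x y else 0)) := by
    rw [← Finset.sum_add_distrib, ← Finset.sum_add_distrib]
    simp_rw [← Finset.sum_add_distrib]
    exact Finset.sum_congr rfl fun x _ => Finset.sum_congr rfl fun y _ => key x y
  have hU := pair_sum_eq S p u hu
  have hV := pair_sum_eq S p v hvS
  have hEq : (∑ z ∈ S, p u z) + ∑ z ∈ S, p z u = (∑ z ∈ S, p v z) + ∑ z ∈ S, p z v := by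
    congr 1
    · exact Finset.sum_congr rfl fun z hz => hp z hz
    · exact Finset.sum_congr rfl fun z hz => hp2 z hz
  rw [hU] at H
  rw [hV] at H
  linarith

lemma shift_degree_pos (G : SimpleGraph V) [DecidableRel G.Adj] (hG : G.Connected)
    (u v : V) (huv : u ≠ v) (S : Finset V) (hu : u ∉ S) (w : V) (hw : w ≠ v) :
    0 < (shiftEdges G u v S).degree w := by
  rw [SimpleGraph.degree_pos_iff_exists_adj]
  by_cases hwS : w ∈ S
  · exact ⟨u, (shift_adj_iff G u v S hu w u).mpr (Or.inr (Or.inr ⟨rfl, hwS⟩))⟩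
  · obtain ⟨z, hz⟩ := exists_adj_of_connected G hG ⟨u, v, huv⟩ w
    refine ⟨z, (shift_adj_iff G u v S hu w z).mpr (Or.inl ⟨hz, ?_⟩)⟩
    rintro (⟨h1, -⟩ | ⟨-, h2⟩)
    · exact hw h1
    · exact hwS h2

lemma lapMatrix_col_zero (G : SimpleGraph V) [DecidableRel G.Adj] (z : V)
    (hz : G.degree z = 0) (w : V) : G.lapMatrix ℝ w z = 0 := by
  have hnz : ∀ y, ¬ G.Adj y z := by
    intro y hy
    have := (G.degree_pos_iff_exists_adj z).mpr ⟨y, hy.symm⟩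
    omega
  by_cases hwz : w = z
  · subst hwz
    simp [SimpleGraph.lapMatrix, SimpleGraph.degMatrix, hz, hnz w]
  · simp [SimpleGraph.lapMatrix, SimpleGraph.degMatrix, Matrix.diagonal_apply_ne _ hwz, hnz w]

lemma normLap_posSemidef (G : SimpleGraph V) [DecidableRel G.Adj] : (normLap G).PosSemidef := by
  have h := (SimpleGraph.posSemidef_lapMatrix ℝ G).mul_mul_conjTranspose_same
    (Matrix.diagonal fun v => (Real.sqrt (G.degree v : ℝ))⁻¹)
  have hD : (Matrix.diagonal fun v => (Real.sqrt (G.degree v : ℝ))⁻¹)ᴴ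
      = Matrix.diagonal fun v => (Real.sqrt (G.degree v : ℝ))⁻¹ := by
    have hstar : (star fun v => (Real.sqrt (G.degree v : ℝ))⁻¹)
        = (fun v => (Real.sqrt (G.degree v : ℝ))⁻¹) := by
      funext w
      simp
    rw [Matrix.diagonal_conjTranspose, hstar]
  rw [normLap]
  nth_rewrite 2 [← hD]
  exact h

lemma normLap_mulVec (G : SimpleGraph V) [DecidableRel G.Adj] (y : V → ℝ) :
    normLap G *ᵥ y = Matrix.diagonal (fun v => (Real.sqrt (G.degree v : ℝ))⁻¹) *ᵥ
      (G.lapMatrix ℝ *ᵥ (Matrix.diagonal (fun v => (Real.sqrt (G.degree v : ℝ))⁻¹) *ᵥ y)) := by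
  rw [normLap, ← mulVec_mulVec, ← mulVec_mulVec]

lemma norm_kernel_const (G : SimpleGraph V) [DecidableRel G.Adj] (hG : G.Connected)
    (hdeg : ∀ w, 0 < G.degree w) {y : V → ℝ} (hy : normLap G *ᵥ y = 0) :
    ∃ c : ℝ, y = fun w => c * Real.sqrt (G.degree w : ℝ) := by
  have hsq : ∀ w, Real.sqrt ((G.degree w : ℝ)) ≠ 0 := fun w =>
    ne_of_gt (Real.sqrt_pos.mpr (by exact_mod_cast hdeg w))
  set h : V → ℝ := Matrix.diagonal (fun v => (Real.sqrt (G.degree v : ℝ))⁻¹) *ᵥ y with hh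
  have hLh : G.lapMatrix ℝ *ᵥ h = 0 := by
    rw [normLap_mulVec] at hy
    funext w
    have h0 := congrFun hy w
    rw [mulVec_diagonal] at h0
    have hinv : (Real.sqrt ((G.degree w : ℝ)))⁻¹ ≠ 0 := inv_ne_zero (hsq w)
    have := (mul_eq_zero.mp h0).resolve_left hinv
    exact this
  have htl : Matrix.toLin' (G.lapMatrix ℝ) h = 0 := by
    rw [Matrix.toLin'_apply, hLh]
  have hconst := (G.lapMatrix_mulVec_eq_zero_iff_forall_reachable).mp hLh
  have hne : Nonempty V := hG.nonempty
  obtain ⟨w₀⟩ := hne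
  refine ⟨h w₀, ?_⟩
  funext w
  have hcw : h w = h w₀ := hconst w w₀ (hG.preconnected w w₀)
  have : y w = Real.sqrt ((G.degree w : ℝ)) * h w := by
    rw [hh]
    simp only [mulVec_diagonal]
    rw [← mul_assoc, mul_inv_cancel₀ (hsq w), one_mul]
  rw [this, hcw, mul_comm]

lemma deg_weighted_sum (G : SimpleGraph V) [DecidableRel G.Adj] (q : V → ℝ) :
    ∑ w, (G.degree w : ℝ) * q w = ∑ a : V, ∑ b : V, (if G.Adj a b then q a else 0) := by
  apply Finset.sum_congr rfl
  intro w _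
  rw [SimpleGraph.degree_eq_sum_if_adj, Finset.sum_mul]
  apply Finset.sum_congr rfl
  intro z _
  by_cases h : G.Adj w z <;> simp [h]

end GraphAux

/-- Theorem 3.6: let `S = {v₁, …, vₛ}` (`1 ≤ s ≤ d(v)`) consist of neighbours of `v` that are
neither neighbours of `u` nor equal to `u`, and let
`G' = G - vv₁ - ⋯ - vvₛ + uv₁ + ⋯ + uvₛ`. If `f` is a harmonic eigenfunction associated with
`λ₂(G)` and `f(u) = f(v)`, then `λ₂(G) ≥ λ₂(G')`. -/
theorem stmt13 {V : Type} [Fintype V] [DecidableEq V] (G : SimpleGraph V) [DecidableRel G.Adj]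
    (hG : G.Connected) (u v : V) (huv : u ≠ v) (S : Finset V) (hS : S.Nonempty)
    (hSv : ∀ x ∈ S, G.Adj v x) (hSu : ∀ x ∈ S, ¬ G.Adj u x) (hu : u ∉ S)
    (hcard : S.card ≤ G.degree v) (f : V → ℝ) (hf : IsHarmonic G (lambda2 G) f)
    (hfuv : f u = f v) :
    lambda2 (shiftEdges G u v S) ≤ lambda2 G := by
  classical
  obtain ⟨hf0, hfeq⟩ := hf
  have hnt : Nontrivial V := ⟨u, v, huv⟩
  have hcard2 : 2 ≤ Fintype.card V := Fintype.one_lt_card_iff_nontrivial.mpr hnt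
  have hdegG : ∀ w, 0 < G.degree w := degree_pos_of_connected G hG hnt
  set lam : ℝ := lambda2 G with hlamdef
  have hfl : f ⬝ᵥ (G.lapMatrix ℝ *ᵥ f) = lam * ∑ w, (G.degree w : ℝ) * f w ^ 2 := by
    rw [hfeq, dotProduct, Finset.mul_sum]
    apply Finset.sum_congr rfl
    intro w _
    ring
  have hLpsd := SimpleGraph.posSemidef_lapMatrix ℝ G
  have hfl_nonneg : 0 ≤ f ⬝ᵥ (G.lapMatrix ℝ *ᵥ f) := by
    have := hLpsd.dotProduct_mulVec_nonneg f
    simpa using this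
  have hsumpos : 0 < ∑ w, (G.degree w : ℝ) * f w ^ 2 := by
    obtain ⟨w₀, hw₀⟩ := Function.ne_iff.mp hf0
    apply Finset.sum_pos'
    · intro i _
      positivity
    · refine ⟨w₀, Finset.mem_univ _, ?_⟩
      have h1 : (0:ℝ) < (G.degree w₀ : ℝ) := by exact_mod_cast hdegG w₀
      have h2 : 0 < f w₀ ^ 2 := lt_of_le_of_ne (sq_nonneg _) (Ne.symm (pow_ne_zero 2 hw₀))
      exact mul_pos h1 h2
  have hlam_nonneg : 0 ≤ lam := by
    rw [hfl] at hfl_nonneg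
    by_contra h
    push_neg at h
    nlinarith
  rcases eq_or_lt_of_le hlam_nonneg with hlam0 | hlampos
  · -- lam = 0 : contradiction with connectivity
    exfalso
    have hpsd := normLap_posSemidef G
    have hle : nthEig (normLap G) 2 ≤ 0 := by
      have hrfl : nthEig (normLap G) 2 = lam := rfl
      exact le_of_eq (hrfl.trans hlam0.symm)
    obtain ⟨y, z, hy, hz, hyz, hy1, hz1⟩ :=
      exists_kernel_pair hpsd.1 hcard2 hpsd.eigenvalues_nonneg hle
    obtain ⟨c, hc⟩ := norm_kernel_const G hG hdegG hy
    obtain ⟨c', hc'⟩ := norm_kernel_const G hG hdegG hz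
    have hsq : ∀ w, Real.sqrt ((G.degree w : ℝ)) * Real.sqrt ((G.degree w : ℝ))
        = (G.degree w : ℝ) := fun w => Real.mul_self_sqrt (by positivity)
    have hyy : c * c * (∑ w, (G.degree w : ℝ)) = 1 := by
      rw [← hy1, hc, dotProduct, Finset.mul_sum]
      apply Finset.sum_congr rfl
      intro w _
      linear_combination (-(c * c)) * hsq w
    have hzz : c' * c' * (∑ w, (G.degree w : ℝ)) = 1 := by
      rw [← hz1, hc', dotProduct, Finset.mul_sum]
      apply Finset.sum_congr rfl
      intro w _
      linear_combination (-(c' * c')) * hsq w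
    have hyz' : c * c' * (∑ w, (G.degree w : ℝ)) = 0 := by
      rw [← hyz, hc, hc', dotProduct, Finset.mul_sum]
      apply Finset.sum_congr rfl
      intro w _
      linear_combination (-(c * c')) * hsq w
    have hc0 : c ≠ 0 := by
      intro h
      rw [h] at hyy
      simp at hyy
    have hc'0 : c' ≠ 0 := by
      intro h
      rw [h] at hzz
      simp at hzz
    have hT0 : (∑ w, (G.degree w : ℝ)) ≠ 0 := by
      intro h
      rw [h] at hyy
      simp at hyy
    exact (mul_ne_zero (mul_ne_zero hc0 hc'0) hT0) hyz'
  · -- 0 < lam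
    have hsum_df : ∑ w, (G.degree w : ℝ) * f w = 0 := by
      have honez : (fun _ : V => (1:ℝ)) ⬝ᵥ (G.lapMatrix ℝ *ᵥ f) = 0 := by
        rw [Matrix.dotProduct_mulVec]
        have hvm : (fun _ : V => (1:ℝ)) ᵥ* G.lapMatrix ℝ = 0 := by
          have hsymm : (G.lapMatrix ℝ)ᵀ = G.lapMatrix ℝ := SimpleGraph.isSymm_lapMatrix ℝ G
          rw [← hsymm, Matrix.vecMul_transpose, SimpleGraph.lapMatrix_mulVec_const_eq_zero]
        rw [hvm, zero_dotProduct]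
      rw [hfeq, dotProduct] at honez
      simp only [one_mul] at honez
      have hmul : lam * ∑ w, (G.degree w : ℝ) * f w = 0 := by
        rw [Finset.mul_sum, ← honez]
      exact (mul_eq_zero.mp hmul).resolve_left (ne_of_gt hlampos)
    have hd'pos : ∀ w, w ≠ v → (0:ℝ) < ((shiftEdges G u v S).degree w : ℝ) := by
      intro w hw
      exact_mod_cast shift_degree_pos G hG u v huv S hu w hw
    have hsqne : ∀ w, w ≠ v → Real.sqrt (((shiftEdges G u v S).degree w : ℝ)) ≠ 0 :=
      fun w hw => ne_of_gt (Real.sqrt_pos.mpr (hd'pos w hw))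
    set φ : V → ℝ := fun w => Real.sqrt (((shiftEdges G u v S).degree w : ℝ)) with hφdef
    set x : V → ℝ := fun w => Real.sqrt (((shiftEdges G u v S).degree w : ℝ)) * f w with hxdef
    have hsq' : ∀ w, Real.sqrt (((shiftEdges G u v S).degree w : ℝ))
        * Real.sqrt (((shiftEdges G u v S).degree w : ℝ))
        = ((shiftEdges G u v S).degree w : ℝ) := fun w => Real.mul_self_sqrt (by positivity)
    -- master sum transfers
    have hshift1 : ∑ w, ((shiftEdges G u v S).degree w : ℝ) * f w
        = ∑ w, (G.degree w : ℝ) * f w := by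
      rw [deg_weighted_sum, deg_weighted_sum]
      exact shift_sum G u v S hSv hSu hu huv (fun a _ => f a)
        (fun z _ => by show f u = f v; exact hfuv) (fun z _ => rfl)
    have hshift2 : ∑ w, ((shiftEdges G u v S).degree w : ℝ) * f w ^ 2
        = ∑ w, (G.degree w : ℝ) * f w ^ 2 := by
      rw [deg_weighted_sum, deg_weighted_sum]
      exact shift_sum G u v S hSv hSu hu huv (fun a _ => f a ^ 2)
        (fun z _ => by show f u ^ 2 = f v ^ 2; rw [hfuv]) (fun z _ => rfl)
    have hquad : (∑ a : V, ∑ b : V, if (shiftEdges G u v S).Adj a b then (f a - f b)^2 else 0)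
        = ∑ a : V, ∑ b : V, if G.Adj a b then (f a - f b)^2 else 0 :=
      shift_sum G u v S hSv hSu hu huv (fun a b => (f a - f b)^2)
        (fun z _ => by show (f u - f z)^2 = (f v - f z)^2; rw [hfuv])
        (fun z _ => by show (f z - f u)^2 = (f z - f v)^2; rw [hfuv])
    have hxx : x ⬝ᵥ x = ∑ w, (G.degree w : ℝ) * f w ^ 2 := by
      rw [dotProduct, ← hshift2]
      apply Finset.sum_congr rfl
      intro w _
      simp only [hxdef]
      linear_combination (f w * f w) * hsq' w
    have hφ0 : φ ≠ 0 := by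
      intro h
      exact hsqne u huv (congrFun h u)
    have hx0 : x ≠ 0 := by
      intro h
      apply hf0
      have hfu : f u = 0 := by
        have hu0 := congrFun h u
        simp only [hxdef, Pi.zero_apply] at hu0
        exact (mul_eq_zero.mp hu0).resolve_left (hsqne u huv)
      funext w
      by_cases hwv : w = v
      · subst hwv
        rw [Pi.zero_apply, ← hfuv]
        exact hfu
      · have hw0 := congrFun h w
        simp only [hxdef, Pi.zero_apply] at hw0
        exact (mul_eq_zero.mp hw0).resolve_left (hsqne w hwv)
    -- the indicator/diagonal computations
    have hDinvφ : Matrix.diagonal (fun w => (Real.sqrt (((shiftEdges G u v S).degree w : ℝ)))⁻¹) *ᵥ φ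
        = fun w => if ((shiftEdges G u v S).degree w : ℝ) = 0 then 0 else 1 := by
      funext w
      rw [Matrix.mulVec_diagonal]
      by_cases h : ((shiftEdges G u v S).degree w : ℝ) = 0
      · rw [if_pos h, hφdef]
        simp [h]
      · rw [if_neg h, hφdef]
        have hs : Real.sqrt (((shiftEdges G u v S).degree w : ℝ)) ≠ 0 := by
          rw [Real.sqrt_ne_zero' ]
          rcases lt_or_eq_of_le (Nat.cast_nonneg ((shiftEdges G u v S).degree w) : (0:ℝ) ≤ _) with h' | h'
          · exact h'
          · exact absurd h'.symm h
        exact inv_mul_cancel₀ hs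
    have hMφ : normLap (shiftEdges G u v S) *ᵥ φ = 0 := by
      rw [normLap_mulVec, hDinvφ]
      have hstep : ((shiftEdges G u v S).lapMatrix ℝ *ᵥ
          fun w => if ((shiftEdges G u v S).degree w : ℝ) = 0 then 0 else 1)
          = (shiftEdges G u v S).lapMatrix ℝ *ᵥ (fun _ => 1) := by
        funext w
        simp only [Matrix.mulVec, dotProduct]
        apply Finset.sum_congr rfl
        intro z _
        by_cases hz : ((shiftEdges G u v S).degree z : ℝ) = 0
        · rw [if_pos hz]
          have hz' : (shiftEdges G u v S).degree z = 0 := by exact_mod_cast hz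
          rw [lapMatrix_col_zero (shiftEdges G u v S) z hz' w]
          ring
        · rw [if_neg hz]
      rw [hstep, SimpleGraph.lapMatrix_mulVec_const_eq_zero, Matrix.mulVec_zero]
    have horth : x ⬝ᵥ φ = 0 := by
      have hexp : x ⬝ᵥ φ = ∑ w, ((shiftEdges G u v S).degree w : ℝ) * f w := by
        rw [dotProduct]
        apply Finset.sum_congr rfl
        intro w _
        simp only [hxdef, hφdef]
        linear_combination (f w) * hsq' w
      rw [hexp, hshift1, hsum_df]
    -- Rayleigh identity
    have hdotdiag : ∀ (e : V → ℝ) (a b : V → ℝ),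
        a ⬝ᵥ (Matrix.diagonal e *ᵥ b) = (Matrix.diagonal e *ᵥ a) ⬝ᵥ b := by
      intro e a b
      simp only [dotProduct, Matrix.mulVec_diagonal]
      apply Finset.sum_congr rfl
      intro w _
      ring
    have hg : Matrix.diagonal (fun w => (Real.sqrt (((shiftEdges G u v S).degree w : ℝ)))⁻¹) *ᵥ x
        = fun w => if ((shiftEdges G u v S).degree w : ℝ) = 0 then 0 else f w := by
      funext w
      rw [Matrix.mulVec_diagonal]
      by_cases h : ((shiftEdges G u v S).degree w : ℝ) = 0
      · rw [if_pos h, hxdef]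
        simp [h]
      · rw [if_neg h, hxdef]
        have hs : Real.sqrt (((shiftEdges G u v S).degree w : ℝ)) ≠ 0 := by
          rw [Real.sqrt_ne_zero']
          rcases lt_or_eq_of_le (Nat.cast_nonneg ((shiftEdges G u v S).degree w) : (0:ℝ) ≤ _) with h' | h'
          · exact h'
          · exact absurd h'.symm h
        rw [← mul_assoc, inv_mul_cancel₀ hs, one_mul]
    have hsame : (∑ i : V, ∑ j : V, if (shiftEdges G u v S).Adj i j then
          ((if ((shiftEdges G u v S).degree i : ℝ) = 0 then 0 else f i)
            - (if ((shiftEdges G u v S).degree j : ℝ) = 0 then 0 else f j))^2 else 0)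
        = ∑ i : V, ∑ j : V, if (shiftEdges G u v S).Adj i j then (f i - f j)^2 else 0 := by
      apply Finset.sum_congr rfl
      intro i _
      apply Finset.sum_congr rfl
      intro j _
      by_cases hij : (shiftEdges G u v S).Adj i j
      · rw [if_pos hij, if_pos hij]
        have hdi : ((shiftEdges G u v S).degree i : ℝ) ≠ 0 := by
          have : 0 < (shiftEdges G u v S).degree i :=
            (SimpleGraph.degree_pos_iff_exists_adj _ _).mpr ⟨j, hij⟩
          positivity
        have hdj : ((shiftEdges G u v S).degree j : ℝ) ≠ 0 := by
          have : 0 < (shiftEdges G u v S).degree j :=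
            (SimpleGraph.degree_pos_iff_exists_adj _ _).mpr ⟨i, hij.symm⟩
          positivity
        rw [if_neg hdi, if_neg hdj]
      · rw [if_neg hij, if_neg hij]
    have hquadform : x ⬝ᵥ (normLap (shiftEdges G u v S) *ᵥ x) = lam * (x ⬝ᵥ x) := by
      rw [normLap_mulVec, hdotdiag, hg]
      have hqf' : (fun w => if ((shiftEdges G u v S).degree w : ℝ) = 0 then 0 else f w) ⬝ᵥ
          ((shiftEdges G u v S).lapMatrix ℝ *ᵥ
            (fun w => if ((shiftEdges G u v S).degree w : ℝ) = 0 then 0 else f w))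
          = (∑ i : V, ∑ j : V, if (shiftEdges G u v S).Adj i j then
              ((if ((shiftEdges G u v S).degree i : ℝ) = 0 then 0 else f i)
                - (if ((shiftEdges G u v S).degree j : ℝ) = 0 then 0 else f j))^2 else 0)/2 := by
        rw [← Matrix.toLinearMap₂'_apply', SimpleGraph.lapMatrix_toLinearMap₂']
      have hqfG : f ⬝ᵥ (G.lapMatrix ℝ *ᵥ f)
          = (∑ i : V, ∑ j : V, if G.Adj i j then (f i - f j)^2 else 0)/2 := by
        rw [← Matrix.toLinearMap₂'_apply', SimpleGraph.lapMatrix_toLinearMap₂']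
      rw [hqf', hsame, hquad, ← hqfG, hfl, hxx]
    have hM'her : (normLap (shiftEdges G u v S)).IsHermitian :=
      (normLap_posSemidef (shiftEdges G u v S)).1
    exact second_eig_le hM'her hcard2 hφ0 hx0 hMφ horth (le_of_lt hlampos) (le_of_eq hquadform)


end NLap
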